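/- (Theorem 1) Let D be a probability distribution on ℝ^d × {1,…,c} that is k-separable with δ-margin, witnessed by a unit vector a ∈ ℝ^d, boundaries b_1 < ⋯ < b_{k+1}, and labels y_1, …, y_k ∈ {1,…,c}. Let f : {1,…,c} → ℝ^m be injective and let ε > 0. Define W ∈ ℝ^{k×m} with first row f(y_1)ᵀ and i-th row (f(y_i) - f(y_{i-1}))ᵀ for 2 ≤ i ≤ k, with columns w_1, …, w_m ∈ ℝ^k; assume max_{1≤j≤m} ‖w_j‖₂ > 0 and set c_s = (1/δ)·log(√k · max_{1≤j≤m} ‖w_j‖₂ / ε). Then the 2-layer sigmoid network g : ℝ^d → ℝ^m given by g_j(x) = Σ_{l=1}^{k} W_{l,j} · ρ(c_s(aᵀx - b_l)) satisfies P_{(x,y)∼D}( max_{1≤j≤m} |g_j(x) - f_j(y)| > ε ) = 0, i.e., for D-almost every (x,y), max_j |g_j(x) - f_j(y)| ≤ ε. -/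

import Mathlib

open RealInnerProductSpace MeasureTheory

/-- The sigmoid function `ρ(t) = 1 / (1 + e^{-t})`. -/
noncomputable def sigmoid (t : ℝ) : ℝ := 1 / (1 + Real.exp (-t))

lemma sigmoid_nonneg (s : ℝ) : 0 ≤ sigmoid s := by
  have := Real.exp_pos (-s); unfold sigmoid; positivity

lemma sigmoid_le_one (s : ℝ) : sigmoid s ≤ 1 := by
  have h := Real.exp_pos (-s)
  rw [sigmoid, div_le_one (by linarith)]; linarith

lemma sigmoid_le_exp (s : ℝ) : sigmoid s ≤ Real.exp s := by
  have h1 := Real.exp_pos s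
  have h2 := Real.exp_pos (-s)
  have h3 : Real.exp s * Real.exp (-s) = 1 := by
    rw [← Real.exp_add]; simp
  rw [sigmoid, div_le_iff₀ (by linarith)]
  nlinarith

lemma one_sub_sigmoid_le_exp (s : ℝ) : 1 - sigmoid s ≤ Real.exp (-s) := by
  have h2 := Real.exp_pos (-s)
  have key : 1 - sigmoid s = Real.exp (-s) / (1 + Real.exp (-s)) := by
    rw [sigmoid]; field_simp; ring
  rw [key]
  calc Real.exp (-s) / (1 + Real.exp (-s)) ≤ Real.exp (-s) / 1 := by
        apply div_le_div_of_nonneg_left h2.le one_pos; linarith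
    _ = Real.exp (-s) := div_one _
set_option maxHeartbeats 1000000 in
/-- **Theorem 1.** If the distribution `μ` on `ℝ^d × {1,…,c}` is `k`-separable with
`δ`-margin (witnessed by the unit vector `a`, boundaries `b_1 < ⋯ < b_{k+1}` and
labels `y_1,…,y_k`), `f` is an injective encoding of the labels into `ℝ^m`, `W` is
the difference-weight matrix built from `f(y_1),…,f(y_k)`, and the scaling factor is
`c_s = (1/δ) log(√k · max_j ‖w_j‖₂ / ε)`, then the 2-layer sigmoid network `g`
satisfies `P_{(x,y)∼D}(max_j |g_j(x) - f_j(y)| > ε) = 0`. -/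
theorem two_layer_network_perfect_fit {d c k m : ℕ} (hk : 0 < k) (hm : 0 < m)
    (μ : Measure (EuclideanSpace ℝ (Fin d) × Fin c)) [IsProbabilityMeasure μ]
    (δ : ℝ) (hδ : 0 < δ)
    (a : EuclideanSpace ℝ (Fin d)) (ha : ‖a‖ = 1)
    (b : Fin (k + 1) → ℝ) (hb : StrictMono b)
    (y : Fin k → Fin c)
    (hcond : ∀ i : Fin k,
      μ {p | (b i.castSucc + δ < ⟪a, p.1⟫ ∧ ⟪a, p.1⟫ < b i.succ - δ) ∧ p.2 = y i}
        = μ {p | b i.castSucc + δ < ⟪a, p.1⟫ ∧ ⟪a, p.1⟫ < b i.succ - δ})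
    (hcover :
      μ {p | ∃ i : Fin k, b i.castSucc + δ < ⟪a, p.1⟫ ∧ ⟪a, p.1⟫ < b i.succ - δ} = 1)
    (f : Fin c → Fin m → ℝ) (hf : Function.Injective f)
    (ε : ℝ) (hε : 0 < ε)
    (W : Matrix (Fin k) (Fin m) ℝ)
    (hW0 : W ⟨0, hk⟩ = f (y ⟨0, hk⟩))
    (hWs : ∀ i j : Fin k, (j : ℕ) = (i : ℕ) + 1 → W j = f (y j) - f (y i))
    (M : ℝ)
    (hM : M = Finset.univ.sup' (Finset.univ_nonempty_iff.mpr ⟨⟨0, hm⟩⟩)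
      (fun j : Fin m => Real.sqrt (∑ l : Fin k, (W l j) ^ 2)))
    (hMpos : 0 < M)
    (cs : ℝ) (hcs : cs = (1 / δ) * Real.log (Real.sqrt k * M / ε))
    (g : EuclideanSpace ℝ (Fin d) → Fin m → ℝ)
    (hg : ∀ x j, g x j = ∑ l : Fin k, W l j * sigmoid (cs * (⟪a, x⟫ - b l.castSucc))) :
    μ {p | ∃ j : Fin m, ε < |g p.1 j - f p.2 j|} = 0 := by
  -- abbreviations
  have hkR : (0:ℝ) < Real.sqrt k := Real.sqrt_pos.mpr (by exact_mod_cast hk)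
  set E : ℝ := Real.exp (-(cs * δ)) with hE
  have hEpos : 0 < E := Real.exp_pos _
  have hEeq : E = ε / (Real.sqrt k * M) := by
    have hx : (0:ℝ) < Real.sqrt k * M / ε := by positivity
    have hcsδ : cs * δ = Real.log (Real.sqrt k * M / ε) := by
      rw [hcs]; field_simp
    rw [hE, hcsδ, Real.exp_neg, Real.exp_log hx, inv_div]
  -- telescoping
  have tele : ∀ n (hn : n < k) (j : Fin m),
      (∑ l : Fin k, if (l:ℕ) ≤ n then W l j else 0) = f (y ⟨n, hn⟩) j := by
    intro n
    induction n with
    | zero =>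
      intro hn j
      have h1 : ∀ l : Fin k, (if (l:ℕ) ≤ 0 then W l j else 0)
          = if l = ⟨0, hn⟩ then W l j else 0 := by
        intro l
        congr 1
        simp [Fin.ext_iff, Nat.le_zero]
      rw [Finset.sum_congr rfl (fun l _ => h1 l), Finset.sum_ite_eq' Finset.univ _ _,
        if_pos (Finset.mem_univ _), hW0]
    | succ n ih =>
      intro hn j
      have hn' : n < k := Nat.lt_of_succ_lt hn
      have h1 : ∀ l : Fin k, (if (l:ℕ) ≤ n + 1 then W l j else 0)
          = (if (l:ℕ) ≤ n then W l j else 0) + (if l = ⟨n+1, hn⟩ then W l j else 0) := by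
        intro l
        by_cases h2 : (l:ℕ) ≤ n
        · have h3 : (l:ℕ) ≤ n + 1 := by omega
          have hne : l ≠ ⟨n+1, hn⟩ := by
            intro h; simp [Fin.ext_iff] at h; omega
          rw [if_pos h3, if_pos h2, if_neg hne, add_zero]
        · by_cases h3 : (l:ℕ) = n + 1
          · have hle : (l:ℕ) ≤ n + 1 := by omega
            have heq : l = ⟨n+1, hn⟩ := Fin.ext h3
            rw [if_pos hle, if_neg h2, if_pos heq, zero_add]
          · have h4 : ¬ (l:ℕ) ≤ n + 1 := by omega
            have hne : l ≠ ⟨n+1, hn⟩ := by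
              intro h; simp [Fin.ext_iff] at h; omega
            rw [if_neg h4, if_neg h2, if_neg hne, add_zero]
      rw [Finset.sum_congr rfl (fun l _ => h1 l), Finset.sum_add_distrib, ih hn',
        Finset.sum_ite_eq' Finset.univ _ _, if_pos (Finset.mem_univ _),
        hWs ⟨n, hn'⟩ ⟨n+1, hn⟩ rfl]
      simp
  -- key analytic bound
  have main : ∀ (i : Fin k) (p : EuclideanSpace ℝ (Fin d) × Fin c),
      b i.castSucc + δ < ⟪a, p.1⟫ → ⟪a, p.1⟫ < b i.succ - δ → p.2 = y i →
      ∀ j : Fin m, |g p.1 j - f p.2 j| ≤ ε := by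
    intro i p h1 h2 hy j
    have termbound : ∀ l : Fin k,
        |sigmoid (cs * (⟪a, p.1⟫ - b l.castSucc)) - (if (l:ℕ) ≤ (i:ℕ) then (1:ℝ) else 0)|
          ≤ E := by
      intro l
      by_cases hl : (l:ℕ) ≤ (i:ℕ)
      · rw [if_pos hl]
        have hbl : b l.castSucc ≤ b i.castSucc := by
          apply hb.monotone
          simp only [Fin.le_def, Fin.coe_castSucc]
          omega
        set s : ℝ := ⟪a, p.1⟫ - b l.castSucc with hs
        have hsδ : δ ≤ s := by simp only [hs]; linarith
        have hρ1 := sigmoid_le_one (cs * s)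
        have hρ0 := sigmoid_nonneg (cs * s)
        rw [abs_sub_comm, abs_of_nonneg (by linarith)]
        rcases le_or_gt 0 cs with hc | hc
        · have hmul : cs * δ ≤ cs * s := mul_le_mul_of_nonneg_left hsδ hc
          calc 1 - sigmoid (cs * s) ≤ Real.exp (-(cs * s)) := one_sub_sigmoid_le_exp _
            _ ≤ E := Real.exp_le_exp.mpr (by linarith)
        · have : (1:ℝ) ≤ E := Real.one_le_exp (by nlinarith)
          linarith
      · rw [if_neg hl, sub_zero, abs_of_nonneg (sigmoid_nonneg _)]
        have hbl : b i.succ ≤ b l.castSucc := by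
          apply hb.monotone
          simp only [Fin.le_def, Fin.coe_castSucc, Fin.val_succ]
          omega
        set s : ℝ := ⟪a, p.1⟫ - b l.castSucc with hs
        have hsδ : s ≤ -δ := by simp only [hs]; linarith
        rcases le_or_gt 0 cs with hc | hc
        · have hmul : cs * s ≤ cs * (-δ) := mul_le_mul_of_nonneg_left hsδ hc
          calc sigmoid (cs * s) ≤ Real.exp (cs * s) := sigmoid_le_exp _
            _ ≤ E := Real.exp_le_exp.mpr (by nlinarith)
        · have : (1:ℝ) ≤ E := Real.one_le_exp (by nlinarith)
          linarith [sigmoid_le_one (cs * s)]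
    have hfy : f p.2 j = ∑ l : Fin k, W l j * (if (l:ℕ) ≤ (i:ℕ) then (1:ℝ) else 0) := by
      rw [hy]
      have := tele i.1 i.2 j
      simp only [Fin.eta] at this
      rw [← this]
      refine Finset.sum_congr rfl ?_
      intro l _
      split_ifs <;> ring
    have hdiff : g p.1 j - f p.2 j = ∑ l : Fin k,
        W l j * (sigmoid (cs * (⟪a, p.1⟫ - b l.castSucc))
          - (if (l:ℕ) ≤ (i:ℕ) then (1:ℝ) else 0)) := by
      rw [hg, hfy, ← Finset.sum_sub_distrib]
      exact Finset.sum_congr rfl (fun l _ => (mul_sub _ _ _).symm)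
    have hCS : (∑ l : Fin k, |W l j|)
        ≤ Real.sqrt k * Real.sqrt (∑ l : Fin k, (W l j) ^ 2) := by
      have h1 : (∑ l : Fin k, |W l j|) ^ 2 ≤ (k:ℝ) * ∑ l : Fin k, (W l j) ^ 2 := by
        have := sq_sum_le_card_mul_sum_sq (s := Finset.univ) (f := fun l : Fin k => |W l j|)
        simpa [sq_abs] using this
      have h2 : (∑ l : Fin k, |W l j|) ≤ Real.sqrt ((k:ℝ) * ∑ l : Fin k, (W l j) ^ 2) :=
        (Real.le_sqrt (Finset.sum_nonneg fun l _ => abs_nonneg _)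
          (by positivity)).mpr h1
      rwa [Real.sqrt_mul (by positivity)] at h2
    have hMj : Real.sqrt (∑ l : Fin k, (W l j) ^ 2) ≤ M := by
      rw [hM]
      exact Finset.le_sup' (fun j : Fin m => Real.sqrt (∑ l : Fin k, (W l j) ^ 2)) (Finset.mem_univ j)
    calc |g p.1 j - f p.2 j|
        = |∑ l : Fin k, W l j * (sigmoid (cs * (⟪a, p.1⟫ - b l.castSucc))
            - (if (l:ℕ) ≤ (i:ℕ) then (1:ℝ) else 0))| := by rw [hdiff]
      _ ≤ ∑ l : Fin k, |W l j * (sigmoid (cs * (⟪a, p.1⟫ - b l.castSucc))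
            - (if (l:ℕ) ≤ (i:ℕ) then (1:ℝ) else 0))| := Finset.abs_sum_le_sum_abs _ _
      _ = ∑ l : Fin k, |W l j| * |sigmoid (cs * (⟪a, p.1⟫ - b l.castSucc))
            - (if (l:ℕ) ≤ (i:ℕ) then (1:ℝ) else 0)| := by
          exact Finset.sum_congr rfl (fun l _ => abs_mul _ _)
      _ ≤ ∑ l : Fin k, |W l j| * E :=
          Finset.sum_le_sum (fun l _ =>
            mul_le_mul_of_nonneg_left (termbound l) (abs_nonneg _))
      _ = (∑ l : Fin k, |W l j|) * E := by rw [Finset.sum_mul]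
      _ ≤ (Real.sqrt k * Real.sqrt (∑ l : Fin k, (W l j) ^ 2)) * E :=
          mul_le_mul_of_nonneg_right hCS hEpos.le
      _ ≤ (Real.sqrt k * M) * E := by
          apply mul_le_mul_of_nonneg_right _ hEpos.le
          exact mul_le_mul_of_nonneg_left hMj hkR.le
      _ = ε := by
          rw [hEeq]
          field_simp
  -- measure-theoretic part
  set strip : Fin k → Set (EuclideanSpace ℝ (Fin d) × Fin c) :=
    fun i => {p | b i.castSucc + δ < ⟪a, p.1⟫ ∧ ⟪a, p.1⟫ < b i.succ - δ} with hstrip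
  set lab : Fin k → Set (EuclideanSpace ℝ (Fin d) × Fin c) :=
    fun i => {p | p.2 = y i} with hlab
  have hTm : Measurable fun p : EuclideanSpace ℝ (Fin d) × Fin c => ⟪a, p.1⟫ :=
    (continuous_const.inner continuous_fst).measurable
  have hstrip_m : ∀ i, MeasurableSet (strip i) := fun i =>
    (measurableSet_lt measurable_const hTm).inter (measurableSet_lt hTm measurable_const)
  have hlab_m : ∀ i, MeasurableSet (lab i) := fun i =>
    measurable_snd (measurableSet_singleton (y i))
  have hnull1 : μ (⋃ i, strip i)ᶜ = 0 := by
    rw [prob_compl_eq_zero_iff (MeasurableSet.iUnion hstrip_m)]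
    rw [← hcover]
    congr 1
    ext p
    simp [hstrip, Set.mem_iUnion]
  have hnull2 : ∀ i, μ (strip i \ lab i) = 0 := by
    intro i
    have h := measure_inter_add_diff (μ := μ) (strip i) (hlab_m i)
    have heq : μ (strip i ∩ lab i) = μ (strip i) := hcond i
    rw [heq] at h
    have h' : μ (strip i) + μ (strip i \ lab i) = μ (strip i) + 0 := by
      rw [add_zero]; exact h
    exact (ENNReal.add_right_inj (measure_ne_top μ _)).mp h'
  apply measure_mono_null (t := (⋃ i, strip i)ᶜ ∪ ⋃ i, (strip i \ lab i))
  · intro p hp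
    obtain ⟨j, hj⟩ := hp
    by_cases hpc : p ∈ ⋃ i, strip i
    · obtain ⟨i, hi⟩ := Set.mem_iUnion.mp hpc
      right
      rw [Set.mem_iUnion]
      refine ⟨i, hi, fun hlabp => ?_⟩
      exact absurd hj (not_lt.mpr (main i p hi.1 hi.2 hlabp j))
    · exact Or.inl hpc
  · exact measure_union_null hnull1 (measure_iUnion_null hnull2)
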